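/- arXiv:2006.03754 — 2 statements merged into one kernel-verified Lean document; each statement's English description precedes it below -/
import Mathlib

section
/- Let n ≥ 2 be an integer and let 1 ≤ p₁,…,pₙ, r ≤ ∞. If the multilinear spherical average T is of strong type at (p₁,…,pₙ;r), then for every k ∈ {1,…,n} one has Σ_{j=1, j≠k}^n 1/p_j + 2/p_k ≤ n − 1 + 2/r. -/
set_option maxHeartbeats 1000000

open MeasureTheory ENNReal Set Metric
open scoped Pointwise


open MeasureTheory ENNReal

/-- The `L^p` "norm" (with respect to Lebesgue measure on `ℝ`) of an
`ℝ≥0∞`-valued function, with the convention for `p = ∞`. -/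
noncomputable def lpNorm (p : ℝ≥0∞) (g : ℝ → ℝ≥0∞) : ℝ≥0∞ :=
  if p = ∞ then essSup g (volume : Measure ℝ)
  else (∫⁻ x, g x ^ p.toReal) ^ (1 / p.toReal)

/-- The normalized (total mass 1) surface measure on the unit sphere
`S^{n-1} ⊂ ℝ^n`, viewed as a measure on `ℝ^n` supported on the sphere. -/
noncomputable def normSphere (n : ℕ) : Measure (EuclideanSpace ℝ (Fin n)) :=
  (Measure.map Subtype.val
      ((volume : Measure (EuclideanSpace ℝ (Fin n))).toSphere) Set.univ)⁻¹ •
    Measure.map Subtype.val ((volume : Measure (EuclideanSpace ℝ (Fin n))).toSphere)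

/-- The multilinear spherical average
`T(f₁,…,fₙ)(x) = ∫_{S^{n-1}} ∏_{j=1}^n f_j(x - σ_j) dσ(σ)`. -/
noncomputable def sphAvg (n : ℕ) (f : Fin n → ℝ → ℝ) (x : ℝ) : ℝ≥0∞ :=
  ∫⁻ σ, ∏ j, ENNReal.ofReal (f j (x - σ j)) ∂(normSphere n)

lemma map_toSphere_univ_ne_top (n : ℕ) :
    Measure.map Subtype.val
      ((volume : Measure (EuclideanSpace ℝ (Fin n))).toSphere) Set.univ ≠ ∞ := by
  rw [Measure.map_apply measurable_subtype_coe MeasurableSet.univ, Set.preimage_univ]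
  exact measure_ne_top _ _

lemma normSphere_le_one (n : ℕ) (A : Set (EuclideanSpace ℝ (Fin n))) :
    normSphere n A ≤ 1 := by
  rw [normSphere, Measure.smul_apply, smul_eq_mul]
  rcases eq_or_ne (Measure.map Subtype.val
      ((volume : Measure (EuclideanSpace ℝ (Fin n))).toSphere) Set.univ) 0 with h0 | h0
  · have hA : Measure.map Subtype.val
        ((volume : Measure (EuclideanSpace ℝ (Fin n))).toSphere) A = 0 :=
      le_antisymm (le_trans (measure_mono (Set.subset_univ A)) h0.le) (zero_le)
    rw [hA, mul_zero]; exact zero_le_one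
  · calc (Measure.map Subtype.val
        ((volume : Measure (EuclideanSpace ℝ (Fin n))).toSphere) Set.univ)⁻¹ *
        Measure.map Subtype.val ((volume : Measure (EuclideanSpace ℝ (Fin n))).toSphere) A
        ≤ (Measure.map Subtype.val
            ((volume : Measure (EuclideanSpace ℝ (Fin n))).toSphere) Set.univ)⁻¹ *
          Measure.map Subtype.val
            ((volume : Measure (EuclideanSpace ℝ (Fin n))).toSphere) Set.univ :=
          mul_le_mul_right (measure_mono (Set.subset_univ A)) _
      _ = 1 := ENNReal.inv_mul_cancel h0 (map_toSphere_univ_ne_top n)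

lemma prod_rpow_eq {ι : Type*} (s : Finset ι) (D : ℝ≥0∞) (hD0 : D ≠ 0) (hDt : D ≠ ∞)
    (e : ι → ℝ) : ∏ j ∈ s, D ^ (e j) = D ^ (∑ j ∈ s, e j) := by
  induction s using Finset.cons_induction with
  | empty => simp
  | cons a s ha ih => rw [Finset.prod_cons, Finset.sum_cons, ih,
      ← ENNReal.rpow_add _ _ hD0 hDt]
lemma exp_le_of_forall {a C' A B : ℝ} (ha : 0 < a)
    (h : ∀ δ : ℝ, 0 < δ → δ ≤ 1/2 → a * δ ^ A ≤ C' * δ ^ B) : B ≤ A := by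
  by_contra hAB
  push_neg at hAB
  have hC' : 0 < C' := by
    by_contra hC
    push_neg at hC
    have h1 := h (1/2) (by norm_num) le_rfl
    have h2 : (0:ℝ) < (1/2:ℝ) ^ A := Real.rpow_pos_of_pos (by norm_num) _
    have h3 : (0:ℝ) < (1/2:ℝ) ^ B := Real.rpow_pos_of_pos (by norm_num) _
    nlinarith [mul_nonpos_of_nonpos_of_nonneg hC h3.le]
  set X : ℝ := (a / (2 * C')) ^ (B - A)⁻¹ with hXdef
  have hX : 0 < X := Real.rpow_pos_of_pos (by positivity) _
  set δ := min (1/2 : ℝ) X with hδdef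
  have hδ0 : 0 < δ := lt_min (by norm_num) hX
  have h1 := h δ hδ0 (min_le_left _ _)
  have hBA : 0 < B - A := by linarith
  have hsplit : δ ^ B = δ ^ A * δ ^ (B - A) := by
    rw [← Real.rpow_add hδ0]; ring_nf
  have hA : 0 < δ ^ A := Real.rpow_pos_of_pos hδ0 _
  have h2 : a ≤ C' * δ ^ (B - A) := by
    rw [hsplit] at h1
    have := le_of_mul_le_mul_right (by linarith [h1] : a * δ ^ A ≤ C' * δ ^ (B - A) * δ ^ A) hA
    exact this
  have h3 : δ ^ (B - A) ≤ a / (2 * C') := by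
    calc δ ^ (B - A) ≤ X ^ (B - A) :=
          Real.rpow_le_rpow hδ0.le (min_le_right _ _) hBA.le
      _ = a / (2 * C') := Real.rpow_inv_rpow (by positivity) hBA.ne'
  have : a ≤ a / 2 := by
    calc a ≤ C' * δ ^ (B - A) := h2
      _ ≤ C' * (a / (2 * C')) := by nlinarith
      _ = a / 2 := by field_simp
  linarith
lemma lpNorm_indicator_le {p : ℝ≥0∞} (hp : 1 ≤ p) (a b : ℝ) :
    lpNorm p (fun x => ENNReal.ofReal ((Set.Ioc a b).indicator 1 x))
      ≤ ENNReal.ofReal (b - a) ^ (p⁻¹.toReal) := by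
  have hkey : ∀ x : ℝ, ENNReal.ofReal ((Set.Ioc a b).indicator 1 x)
      = (Set.Ioc a b).indicator (fun _ => (1:ℝ≥0∞)) x := by
    intro x
    by_cases hx : x ∈ Set.Ioc a b <;>
      simp [Set.indicator_apply, hx]
  rcases eq_or_ne p ∞ with hptop | hptop
  · rw [_root_.lpNorm, if_pos hptop, hptop]
    simp only [ENNReal.inv_top, ENNReal.toReal_zero, ENNReal.rpow_zero]
    refine essSup_le_of_ae_le 1 (Filter.Eventually.of_forall fun x => ?_)
    show ENNReal.ofReal ((Set.Ioc a b).indicator 1 x) ≤ 1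
    by_cases hx : x ∈ Set.Ioc a b <;> simp [Set.indicator_apply, hx]
  · have hp0 : p ≠ 0 := by positivity
    have ht : 0 < p.toReal := ENNReal.toReal_pos hp0 hptop
    rw [_root_.lpNorm, if_neg hptop]
    have : ∀ x : ℝ, ENNReal.ofReal ((Set.Ioc a b).indicator 1 x) ^ p.toReal
        = (Set.Ioc a b).indicator (fun _ => (1:ℝ≥0∞)) x := by
      intro x
      rw [hkey]
      by_cases hx : x ∈ Set.Ioc a b
      · simp [Set.indicator_apply, hx]
      · simp [Set.indicator_apply, hx, ENNReal.zero_rpow_of_pos ht]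
    simp only [this]
    rw [lintegral_indicator measurableSet_Ioc _, setLIntegral_one, Real.volume_Ioc,
      ENNReal.toReal_inv, one_div]

lemma le_lpNorm {r : ℝ≥0∞} (hr : 1 ≤ r) (g : ℝ → ℝ≥0∞) {K : ℝ≥0∞} (hK : K ≠ ∞)
    {a b : ℝ} (hab : a < b) (hg : ∀ x ∈ Set.Ioc a b, K ≤ g x) :
    K * ENNReal.ofReal (b - a) ^ (r⁻¹.toReal) ≤ lpNorm r g := by
  have hv : (0:ℝ≥0∞) < ENNReal.ofReal (b - a) := ENNReal.ofReal_pos.2 (by linarith)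
  rcases eq_or_ne r ∞ with hrtop | hrtop
  · rw [_root_.lpNorm, if_pos hrtop, hrtop]
    simp only [ENNReal.inv_top, ENNReal.toReal_zero, ENNReal.rpow_zero, mul_one]
    by_contra h
    push_neg at h
    have hae := ae_lt_of_essSup_lt h
    have hsub : Set.Ioc a b ⊆ {x | ¬ g x < K} := fun x hx => not_lt.2 (hg x hx)
    have : (volume : Measure ℝ) (Set.Ioc a b) = 0 :=
      measure_mono_null hsub hae
    rw [Real.volume_Ioc] at this
    exact hv.ne' this
  · have hr0 : r ≠ 0 := by positivity
    have ht : 0 < r.toReal := ENNReal.toReal_pos hr0 hrtop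
    rw [_root_.lpNorm, if_neg hrtop]
    have hmono : ∫⁻ x, (Set.Ioc a b).indicator (fun _ => K ^ r.toReal) x
        ≤ ∫⁻ x, g x ^ r.toReal := by
      refine lintegral_mono fun x => ?_
      by_cases hx : x ∈ Set.Ioc a b
      · simpa [Set.indicator_apply, hx] using ENNReal.rpow_le_rpow (hg x hx) ht.le
      · simp [Set.indicator_apply, hx]
    rw [lintegral_indicator measurableSet_Ioc _, setLIntegral_const, Real.volume_Ioc] at hmono
    calc K * ENNReal.ofReal (b - a) ^ r⁻¹.toReal
        = (K ^ r.toReal * ENNReal.ofReal (b - a)) ^ (1 / r.toReal) := by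
          rw [ENNReal.mul_rpow_of_nonneg _ _ (by positivity), ← ENNReal.rpow_mul,
            mul_one_div, div_self ht.ne', ENNReal.rpow_one, ENNReal.toReal_inv, one_div]
      _ ≤ (∫⁻ x, g x ^ r.toReal) ^ (1 / r.toReal) :=
          ENNReal.rpow_le_rpow hmono (by positivity)
lemma normSphere_cap (n : ℕ) (hn : 2 ≤ n) (k : Fin n) :
    ∃ c : ℝ≥0∞, c ≠ 0 ∧ c ≠ ∞ ∧ ∀ δ : ℝ, 0 < δ → δ ≤ 1/2 →
      c * ENNReal.ofReal δ ^ (n - 1 : ℕ) ≤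
        normSphere n ({σ : EuclideanSpace ℝ (Fin n) | Real.sqrt (1 - δ^2) ≤ σ k}
          ∩ Metric.sphere 0 1) := by
  have hnR : (0:ℝ) < n := by positivity
  set M := Measure.map Subtype.val
      ((volume : Measure (EuclideanSpace ℝ (Fin n))).toSphere) Set.univ with hMdef
  have hM : M = (volume : Measure (EuclideanSpace ℝ (Fin n))).toSphere Set.univ := by
    rw [hMdef, Measure.map_apply measurable_subtype_coe MeasurableSet.univ, Set.preimage_univ]
  have hMtop : M ≠ ∞ := by rw [hM]; exact measure_ne_top _ _
  have hM0 : M ≠ 0 := by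
    rw [hM, Measure.toSphere_apply_univ, finrank_euclideanSpace_fin]
    refine mul_ne_zero ?_ (measure_ball_pos _ _ one_pos).ne'
    simp only [ne_eq, Nat.cast_eq_zero]; omega
  have hsn : (0:ℝ) < Real.sqrt n := Real.sqrt_pos.2 hnR
  set γ : ℝ := (8 * Real.sqrt n)⁻¹ with hγdef
  have hγ0 : 0 < γ := by positivity
  have hγ2 : γ^2 = (64 * (n:ℝ))⁻¹ := by
    rw [hγdef, inv_pow, mul_pow, Real.sq_sqrt (Nat.cast_nonneg n)]
    norm_num
  refine ⟨M⁻¹ * (ENNReal.ofReal (1/4) * ENNReal.ofReal γ ^ (n-1:ℕ)), ?_, ?_, ?_⟩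
  · exact mul_ne_zero (ENNReal.inv_ne_zero.2 hMtop)
      (mul_ne_zero (by simp) (pow_ne_zero _ (ENNReal.ofReal_pos.2 hγ0).ne'))
  · exact ENNReal.mul_ne_top (ENNReal.inv_ne_top.2 hM0)
      (ENNReal.mul_ne_top ENNReal.ofReal_ne_top (ENNReal.pow_ne_top ENNReal.ofReal_ne_top))
  intro δ hδ0 hδ
  set b : ℝ := δ * γ with hbdef
  have hb0 : 0 < b := by positivity
  set tset : Fin n → Set ℝ :=
    fun j => if j = k then Set.Ioo (1/2:ℝ) (3/4) else Set.Ioo 0 b with htsetdef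
  set Box : Set (EuclideanSpace ℝ (Fin n)) := WithLp.ofLp ⁻¹' Set.univ.pi tset with hBoxdef
  set Cap : Set (EuclideanSpace ℝ (Fin n)) :=
    {σ : EuclideanSpace ℝ (Fin n) | Real.sqrt (1 - δ^2) ≤ σ k} ∩ Metric.sphere 0 1 with hCapdef
  have hHmeas : MeasurableSet {σ : EuclideanSpace ℝ (Fin n) | Real.sqrt (1 - δ^2) ≤ σ k} :=
    measurableSet_le measurable_const (EuclideanSpace.proj k).continuous.measurable
  have hCapMeas : MeasurableSet Cap := hHmeas.inter isClosed_sphere.measurableSet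
  -- Box is contained in the cone over the cap
  have hBox : Box ⊆ Set.Ioo (0:ℝ) 1 • Cap := by
    intro x hx
    have hxk : x k ∈ Set.Ioo (1/2:ℝ) (3/4) := by
      have := hx k (Set.mem_univ k); simpa [htsetdef] using this
    have hxj : ∀ j, j ≠ k → x j ∈ Set.Ioo (0:ℝ) b := fun j hj => by
      have := hx j (Set.mem_univ j); simpa [htsetdef, hj] using this
    set S : ℝ := ∑ j ∈ Finset.univ.erase k, (x j)^2 with hSdef
    have hS0 : 0 ≤ S := Finset.sum_nonneg fun j _ => sq_nonneg _
    have hSle : S ≤ δ^2/64 := by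
      have hcard : (Finset.univ.erase k).card = n - 1 := by
        simp [Finset.card_erase_of_mem]
      have h1 : S ≤ (Finset.univ.erase k).card • (b^2) :=
        Finset.sum_le_card_nsmul _ _ _ (fun j hj => by
          have hj' : j ≠ k := Finset.ne_of_mem_erase hj
          have h := hxj j hj'
          nlinarith [h.1, h.2])
      rw [hcard, nsmul_eq_mul] at h1
      have hcastle : ((n-1:ℕ):ℝ) ≤ (n:ℝ) := by exact_mod_cast Nat.cast_le.2 (Nat.sub_le n 1)
      have hb2 : b^2 = δ^2 * (64*(n:ℝ))⁻¹ := by rw [hbdef, mul_pow, hγ2]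
      rw [hb2] at h1
      have h2 : ((n-1:ℕ):ℝ) * (δ^2 * (64*(n:ℝ))⁻¹) ≤ (n:ℝ) * (δ^2 * (64*(n:ℝ))⁻¹) := by
        have : (0:ℝ) ≤ δ^2 * (64*(n:ℝ))⁻¹ := by positivity
        nlinarith
      have h3 : (n:ℝ) * (δ^2 * (64*(n:ℝ))⁻¹) = δ^2/64 := by field_simp
      linarith
    have hnormx : ‖x‖^2 = (x k)^2 + S := by
      rw [EuclideanSpace.norm_eq, Real.sq_sqrt (Finset.sum_nonneg fun j _ => by positivity)]
      simp only [Real.norm_eq_abs, sq_abs]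
      rw [hSdef]
      exact (Finset.add_sum_erase _ _ (Finset.mem_univ k)).symm
    have hRnn : 0 ≤ ‖x‖ := norm_nonneg x
    have hRpos : 0 < ‖x‖ := by nlinarith [hxk.1, hxk.2]
    have hR1 : ‖x‖ < 1 := by nlinarith [hxk.1, hxk.2, sq_nonneg δ]
    set u : EuclideanSpace ℝ (Fin n) := ‖x‖⁻¹ • x with hudef
    have hu_norm : ‖u‖ = 1 := by
      rw [hudef, norm_smul, norm_inv, norm_norm, inv_mul_cancel₀ hRpos.ne']
    have hu_sphere : u ∈ Metric.sphere (0:EuclideanSpace ℝ (Fin n)) 1 :=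
      mem_sphere_zero_iff_norm.2 hu_norm
    have huk : u k = ‖x‖⁻¹ * x k := rfl
    have hu_k : Real.sqrt (1 - δ^2) ≤ u k := by
      have key : Real.sqrt (1 - δ^2) * ‖x‖ ≤ x k := by
        have h1δ : (0:ℝ) ≤ 1 - δ^2 := by nlinarith
        rw [show Real.sqrt (1-δ^2) * ‖x‖ = Real.sqrt ((1-δ^2) * ‖x‖^2) by
          rw [Real.sqrt_mul h1δ, Real.sqrt_sq hRnn]]
        have hxk2 : (1/4:ℝ) ≤ (x k)^2 := by nlinarith [hxk.1]
        have h5 : δ^2*(1/4) ≤ δ^2 * (x k)^2 := mul_le_mul_of_nonneg_left hxk2 (sq_nonneg δ)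
        have h6 : (0:ℝ) ≤ δ^2 * S := mul_nonneg (sq_nonneg δ) hS0
        have h2 : (1-δ^2) * ‖x‖^2 ≤ (x k)^2 := by rw [hnormx]; nlinarith [hSle, h5, h6]
        calc Real.sqrt ((1-δ^2) * ‖x‖^2) ≤ Real.sqrt ((x k)^2) := Real.sqrt_le_sqrt h2
          _ = x k := Real.sqrt_sq (by linarith [hxk.1])
      rw [huk]
      calc Real.sqrt (1-δ^2) = Real.sqrt (1-δ^2) * ‖x‖ * ‖x‖⁻¹ := by
            field_simp
        _ ≤ x k * ‖x‖⁻¹ := by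
            exact mul_le_mul_of_nonneg_right key (by positivity)
        _ = ‖x‖⁻¹ * x k := by ring
    have hx_eq : x = ‖x‖ • u := by
      rw [hudef, smul_smul, mul_inv_cancel₀ hRpos.ne', one_smul]
    exact Set.mem_smul.2 ⟨‖x‖, ⟨hRpos, hR1⟩, u, ⟨hu_k, hu_sphere⟩, hx_eq.symm⟩
  -- volume of the box
  have htm : ∀ j : Fin n, MeasurableSet (tset j) := fun j => by
    rw [htsetdef]; dsimp only; split <;> exact measurableSet_Ioo
  have hBoxVol : (volume : Measure (EuclideanSpace ℝ (Fin n))) Box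
      = ENNReal.ofReal (1/4) * ENNReal.ofReal b ^ (n-1:ℕ) := by
    rw [hBoxdef,
      ← ((EuclideanSpace.volume_preserving_symm_measurableEquiv_toLp (Fin n)).symm).measure_preimage
        ((MeasurableSet.univ_pi htm).preimage (PiLp.volume_preserving_ofLp (Fin n)).measurable).nullMeasurableSet,
      show (MeasurableEquiv.toLp 2 (Fin n → ℝ)).symm.symm ⁻¹' (WithLp.ofLp ⁻¹' Set.univ.pi tset)
        = Set.univ.pi tset from rfl, volume_pi_pi]
    rw [← Finset.mul_prod_erase Finset.univ _ (Finset.mem_univ k)]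
    have h1 : volume (tset k) = ENNReal.ofReal (1/4) := by
      rw [htsetdef]; dsimp only; rw [if_pos rfl, Real.volume_Ioo]; norm_num
    have h2 : ∀ j ∈ Finset.univ.erase k, volume (tset j) = ENNReal.ofReal b := fun j hj => by
      rw [htsetdef]; dsimp only; rw [if_neg (Finset.ne_of_mem_erase hj), Real.volume_Ioo, sub_zero]
    rw [h1, Finset.prod_congr rfl h2, Finset.prod_const,
      Finset.card_erase_of_mem (Finset.mem_univ k), Finset.card_univ, Fintype.card_fin]
  -- put everything together
  have hchain : (volume : Measure (EuclideanSpace ℝ (Fin n))) Box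
      ≤ (volume : Measure (EuclideanSpace ℝ (Fin n))).toSphere
        (Subtype.val ⁻¹' Cap : Set (Metric.sphere (0 : EuclideanSpace ℝ (Fin n)) 1)) := by
    rw [Measure.toSphere_apply' _ (measurable_subtype_coe hCapMeas), finrank_euclideanSpace_fin]
    have himg : (Subtype.val ''
        (Subtype.val ⁻¹' Cap : Set (Metric.sphere (0 : EuclideanSpace ℝ (Fin n)) 1)) :
        Set (EuclideanSpace ℝ (Fin n))) = Cap := by
      rw [Subtype.image_preimage_coe]
      exact Set.inter_eq_self_of_subset_right Set.inter_subset_right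
    rw [himg]
    calc (volume : Measure (EuclideanSpace ℝ (Fin n))) Box
        ≤ (volume : Measure (EuclideanSpace ℝ (Fin n))) (Set.Ioo (0:ℝ) 1 • Cap) :=
          measure_mono hBox
      _ ≤ (n:ℝ≥0∞) * (volume : Measure (EuclideanSpace ℝ (Fin n))) (Set.Ioo (0:ℝ) 1 • Cap) :=
          le_mul_of_one_le_left (zero_le) (by exact_mod_cast Nat.one_le_cast.2 (by omega))
  have hns : normSphere n Cap
      = M⁻¹ * (volume : Measure (EuclideanSpace ℝ (Fin n))).toSphere
        (Subtype.val ⁻¹' Cap : Set (Metric.sphere (0 : EuclideanSpace ℝ (Fin n)) 1)) := by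
    rw [normSphere, ← hMdef, Measure.smul_apply, smul_eq_mul,
      Measure.map_apply measurable_subtype_coe hCapMeas]
  rw [hns]
  calc M⁻¹ * (ENNReal.ofReal (1/4) * ENNReal.ofReal γ ^ (n-1:ℕ)) * ENNReal.ofReal δ ^ (n-1:ℕ)
      = M⁻¹ * (ENNReal.ofReal (1/4) * ENNReal.ofReal b ^ (n-1:ℕ)) := by
        rw [hbdef, ENNReal.ofReal_mul hδ0.le, mul_pow]; ring
    _ = M⁻¹ * (volume : Measure (EuclideanSpace ℝ (Fin n))) Box := by rw [hBoxVol]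
    _ ≤ M⁻¹ * (volume : Measure (EuclideanSpace ℝ (Fin n))).toSphere
        (Subtype.val ⁻¹' Cap : Set (Metric.sphere (0 : EuclideanSpace ℝ (Fin n)) 1)) :=
        mul_le_mul_right hchain _
theorem necessary_condition_ii (n : ℕ) (hn : 2 ≤ n) (p : Fin n → ℝ≥0∞) (r : ℝ≥0∞)
    (hp : ∀ j, 1 ≤ p j) (hr : 1 ≤ r)
    (hT : ∃ C : ℝ, 0 < C ∧ ∀ f : Fin n → ℝ → ℝ,
      (∀ j, Measurable (f j)) → (∀ j x, 0 ≤ f j x) →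
      lpNorm r (sphAvg n f) ≤ ENNReal.ofReal C *
        ∏ j, lpNorm (p j) (fun x => ENNReal.ofReal (f j x))) :
    ∀ k : Fin n, (∑ j ∈ Finset.univ.erase k, 1 / p j) + 2 / p k ≤
      ((n - 1 : ℕ) : ℝ≥0∞) + 2 / r := by
  intro k
  obtain ⟨C, hC, hTT⟩ := hT
  obtain ⟨c, hc0, hctop, hcap⟩ := normSphere_cap n hn k
  have hple : ∀ j, ((p j)⁻¹).toReal ≤ 1 := fun j => by
    have h1 : (p j)⁻¹ ≤ 1 := ENNReal.inv_le_one.2 (hp j)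
    simpa using ENNReal.toReal_mono ENNReal.one_ne_top h1
  have hstep : ∀ δ : ℝ, 0 < δ → δ ≤ 1/2 →
      c * ENNReal.ofReal δ ^ (((n-1:ℕ):ℝ) + 2*(r⁻¹).toReal)
        ≤ (ENNReal.ofReal C * (2 * 4^(n-1:ℕ))) *
          ENNReal.ofReal δ ^ (2*((p k)⁻¹).toReal
            + ∑ j ∈ Finset.univ.erase k, ((p j)⁻¹).toReal) := by
    intro δ hδ0 hδ
    have hD0 : ENNReal.ofReal δ ≠ 0 := (ENNReal.ofReal_pos.2 hδ0).ne'
    have hDt : ENNReal.ofReal δ ≠ ∞ := ENNReal.ofReal_ne_top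
    set f : Fin n → ℝ → ℝ := fun j =>
      if j = k then (Set.Ioc (-1) (-1 + 2*δ^2)).indicator 1
      else (Set.Ioc (-(2*δ)) (2*δ)).indicator 1 with hfdef
    have hfm : ∀ j, Measurable (f j) := fun j => by
      rw [hfdef]; dsimp only; split <;>
        exact measurable_const.indicator measurableSet_Ioc
    have hfnn : ∀ j x, 0 ≤ f j x := fun j x => by
      rw [hfdef]; dsimp only; split <;>
        exact Set.indicator_nonneg (fun _ _ => zero_le_one) x
    have hbound := hTT f hfm hfnn
    set Cap := {σ : EuclideanSpace ℝ (Fin n) | Real.sqrt (1 - δ^2) ≤ σ k}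
      ∩ Metric.sphere 0 1 with hCapdef
    have hCapMeas : MeasurableSet Cap :=
      (measurableSet_le measurable_const
        (EuclideanSpace.proj k).continuous.measurable).inter isClosed_sphere.measurableSet
    have hKtop : normSphere n Cap ≠ ∞ :=
      (lt_of_le_of_lt (normSphere_le_one n Cap) ENNReal.one_lt_top).ne
    have hδsq : (0:ℝ) ≤ 1 - δ^2 := by nlinarith
    have hsqrt_ge : 1 - δ^2 ≤ Real.sqrt (1 - δ^2) := by
      have h1 : (1-δ^2)^2 ≤ 1-δ^2 := by nlinarith
      have h2 := Real.sqrt_le_sqrt h1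
      rwa [Real.sqrt_sq hδsq] at h2
    have hKlow : ∀ x ∈ Set.Ioc (0:ℝ) (δ^2), normSphere n Cap ≤ sphAvg n f x := by
      intro x hx
      have hpt : ∀ σ : EuclideanSpace ℝ (Fin n),
          Cap.indicator (fun _ => (1:ℝ≥0∞)) σ ≤ ∏ j, ENNReal.ofReal (f j (x - σ j)) := by
        intro σ
        by_cases hσ : σ ∈ Cap
        · rw [Set.indicator_of_mem hσ]
          have hσk : Real.sqrt (1 - δ^2) ≤ σ k := hσ.1
          have hσs : ‖σ‖ = 1 := mem_sphere_zero_iff_norm.1 hσ.2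
          have hsum : ∑ j, (σ j)^2 = 1 := by
            have h2 : ‖σ‖^2 = 1 := by rw [hσs]; norm_num
            rw [EuclideanSpace.norm_eq,
              Real.sq_sqrt (Finset.sum_nonneg fun j _ => by positivity)] at h2
            simpa [Real.norm_eq_abs, sq_abs] using h2
          have hσk2 : 1 - δ^2 ≤ σ k := le_trans hsqrt_ge hσk
          have hσk0 : 0 ≤ σ k := by nlinarith
          have hσk1 : σ k ≤ 1 := by
            have h4 : (σ k)^2 ≤ ∑ j, (σ j)^2 :=
              Finset.single_le_sum (fun j _ => sq_nonneg (σ j)) (Finset.mem_univ k)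
            rw [hsum] at h4
            nlinarith
          have hσj : ∀ j, j ≠ k → -δ ≤ σ j ∧ σ j ≤ δ := by
            intro j hj
            have hσksq : 1 - δ^2 ≤ (σ k)^2 := by
              have h5 := pow_le_pow_left₀ (Real.sqrt_nonneg _) hσk 2
              rwa [Real.sq_sqrt hδsq] at h5
            have h4 : (σ j)^2 ≤ δ^2 := by
              have h5 : (σ j)^2 ≤ ∑ i ∈ Finset.univ.erase k, (σ i)^2 :=
                Finset.single_le_sum (f := fun i : Fin n => (σ i)^2)
                  (fun i _ => sq_nonneg _) (Finset.mem_erase.2 ⟨hj, Finset.mem_univ j⟩)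
              have h6 : (σ k)^2 + ∑ i ∈ Finset.univ.erase k, (σ i)^2 = 1 := by
                rw [Finset.add_sum_erase _ (fun i : Fin n => (σ i)^2) (Finset.mem_univ k)]
                exact hsum
              nlinarith
            constructor <;> nlinarith
          refine le_of_eq (Finset.prod_eq_one fun j _ => ?_).symm
          by_cases hj : j = k
          · subst hj
            rw [hfdef]; dsimp only; rw [if_pos rfl, Set.indicator_of_mem, Pi.one_apply,
              ENNReal.ofReal_one]
            constructor
            · linarith [hx.1]
            · linarith [hx.2]
          · rw [hfdef]; dsimp only; rw [if_neg hj, Set.indicator_of_mem, Pi.one_apply,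
              ENNReal.ofReal_one]
            obtain ⟨h7, h8⟩ := hσj j hj
            constructor
            · linarith [hx.1]
            · nlinarith [hx.2]
        · rw [Set.indicator_of_notMem hσ]; exact zero_le
      calc normSphere n Cap
          = ∫⁻ σ, Cap.indicator (fun _ => (1:ℝ≥0∞)) σ ∂(normSphere n) := by
            rw [lintegral_indicator hCapMeas, setLIntegral_one]
        _ ≤ sphAvg n f x := lintegral_mono hpt
    have hlow := le_lpNorm hr (sphAvg n f) hKtop (by positivity : (0:ℝ) < δ^2) hKlow
    rw [sub_zero] at hlow
    have hupk : lpNorm (p k) (fun x => ENNReal.ofReal (f k x))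
        ≤ 2 * ENNReal.ofReal δ ^ (2 * ((p k)⁻¹).toReal) := by
      have h1 : f k = (Set.Ioc (-1:ℝ) (-1 + 2*δ^2)).indicator 1 := by
        rw [hfdef]; dsimp only; rw [if_pos rfl]
      rw [h1]
      refine le_trans (lpNorm_indicator_le (hp k) _ _) ?_
      rw [show (-1 + 2*δ^2) - (-1:ℝ) = 2*δ^2 by ring,
        ENNReal.ofReal_mul (by norm_num : (0:ℝ) ≤ 2),
        ENNReal.ofReal_pow hδ0.le,
        ENNReal.mul_rpow_of_nonneg _ _ ENNReal.toReal_nonneg,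
        ← ENNReal.rpow_natCast (ENNReal.ofReal δ) 2, ← ENNReal.rpow_mul]
      push_cast
      gcongr
      all_goals norm_num [ENNReal.ofReal_ofNat]
      all_goals
        refine le_trans (ENNReal.rpow_le_rpow_of_exponent_le (by norm_num) ?_)
          (by rw [ENNReal.rpow_one])
        rw [← ENNReal.toReal_inv]
        exact hple _
    have hupj : ∀ j ∈ Finset.univ.erase k,
        lpNorm (p j) (fun x => ENNReal.ofReal (f j x))
          ≤ 4 * ENNReal.ofReal δ ^ (((p j)⁻¹).toReal) := by
      intro j hj
      have hjk := Finset.ne_of_mem_erase hj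
      have h1 : f j = (Set.Ioc (-(2*δ)) (2*δ)).indicator 1 := by
        rw [hfdef]; dsimp only; rw [if_neg hjk]
      rw [h1]
      refine le_trans (lpNorm_indicator_le (hp j) _ _) ?_
      rw [show (2*δ) - (-(2*δ)) = 4*δ by ring,
        ENNReal.ofReal_mul (by norm_num : (0:ℝ) ≤ 4),
        ENNReal.mul_rpow_of_nonneg _ _ ENNReal.toReal_nonneg]
      gcongr
      all_goals norm_num [ENNReal.ofReal_ofNat]
      all_goals
        refine le_trans (ENNReal.rpow_le_rpow_of_exponent_le (by norm_num) ?_)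
          (by rw [ENNReal.rpow_one])
        rw [← ENNReal.toReal_inv]
        exact hple _
    have hprod : ∏ j, lpNorm (p j) (fun x => ENNReal.ofReal (f j x))
        ≤ (2 * 4^(n-1:ℕ)) *
          ENNReal.ofReal δ ^ (2*((p k)⁻¹).toReal
            + ∑ j ∈ Finset.univ.erase k, ((p j)⁻¹).toReal) := by
      rw [← Finset.mul_prod_erase Finset.univ _ (Finset.mem_univ k)]
      calc lpNorm (p k) (fun x => ENNReal.ofReal (f k x)) *
            ∏ j ∈ Finset.univ.erase k, lpNorm (p j) (fun x => ENNReal.ofReal (f j x))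
          ≤ (2 * ENNReal.ofReal δ ^ (2 * ((p k)⁻¹).toReal)) *
            ∏ j ∈ Finset.univ.erase k, (4 * ENNReal.ofReal δ ^ (((p j)⁻¹).toReal)) :=
            mul_le_mul' hupk (Finset.prod_le_prod' hupj)
        _ = (2 * 4^(n-1:ℕ)) * ENNReal.ofReal δ ^ (2*((p k)⁻¹).toReal
              + ∑ j ∈ Finset.univ.erase k, ((p j)⁻¹).toReal) := by
            rw [Finset.prod_mul_distrib, Finset.prod_const,
              Finset.card_erase_of_mem (Finset.mem_univ k), Finset.card_univ,
              Fintype.card_fin, prod_rpow_eq _ _ hD0 hDt,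
              ENNReal.rpow_add _ _ hD0 hDt]
            ring
    have hLHS : c * ENNReal.ofReal δ ^ (((n-1:ℕ):ℝ) + 2*(r⁻¹).toReal)
        = (c * ENNReal.ofReal δ ^ (n-1:ℕ)) * ENNReal.ofReal (δ^2) ^ ((r⁻¹).toReal) := by
      rw [ENNReal.ofReal_pow hδ0.le, ← ENNReal.rpow_natCast (ENNReal.ofReal δ) 2,
        ← ENNReal.rpow_mul, ENNReal.rpow_add _ _ hD0 hDt,
        ENNReal.rpow_natCast]
      ring
    calc c * ENNReal.ofReal δ ^ (((n-1:ℕ):ℝ) + 2*(r⁻¹).toReal)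
        = (c * ENNReal.ofReal δ ^ (n-1:ℕ)) * ENNReal.ofReal (δ^2) ^ ((r⁻¹).toReal) := hLHS
      _ ≤ normSphere n Cap * ENNReal.ofReal (δ^2) ^ ((r⁻¹).toReal) :=
          mul_le_mul_left (hcap δ hδ0 hδ) _
      _ ≤ lpNorm r (sphAvg n f) := hlow
      _ ≤ ENNReal.ofReal C * ∏ j, lpNorm (p j) (fun x => ENNReal.ofReal (f j x)) := hbound
      _ ≤ ENNReal.ofReal C * ((2 * 4^(n-1:ℕ)) *
            ENNReal.ofReal δ ^ (2*((p k)⁻¹).toReal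
              + ∑ j ∈ Finset.univ.erase k, ((p j)⁻¹).toReal)) :=
          mul_le_mul_right hprod _
      _ = (ENNReal.ofReal C * (2 * 4^(n-1:ℕ))) *
            ENNReal.ofReal δ ^ (2*((p k)⁻¹).toReal
              + ∑ j ∈ Finset.univ.erase k, ((p j)⁻¹).toReal) := by ring
  have hBnn : (0:ℝ) ≤ 2*((p k)⁻¹).toReal + ∑ j ∈ Finset.univ.erase k, ((p j)⁻¹).toReal :=
    add_nonneg (mul_nonneg (by norm_num) ENNReal.toReal_nonneg)
      (Finset.sum_nonneg fun j _ => ENNReal.toReal_nonneg)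
  have hCconst_ne : (ENNReal.ofReal C * (2 * 4^(n-1:ℕ))) ≠ ∞ :=
    ENNReal.mul_ne_top ENNReal.ofReal_ne_top
      (ENNReal.mul_ne_top (by norm_num) (ENNReal.pow_ne_top (by norm_num)))
  have hreal : ∀ δ : ℝ, 0 < δ → δ ≤ 1/2 →
      c.toReal * δ ^ (((n-1:ℕ):ℝ) + 2*(r⁻¹).toReal)
        ≤ (ENNReal.ofReal C * (2 * 4^(n-1:ℕ))).toReal *
          δ ^ (2*((p k)⁻¹).toReal + ∑ j ∈ Finset.univ.erase k, ((p j)⁻¹).toReal) := by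
    intro δ h1 h2
    have h3 := hstep δ h1 h2
    have h4 : (ENNReal.ofReal C * (2 * 4^(n-1:ℕ))) *
        ENNReal.ofReal δ ^ (2*((p k)⁻¹).toReal
          + ∑ j ∈ Finset.univ.erase k, ((p j)⁻¹).toReal) ≠ ∞ :=
      ENNReal.mul_ne_top hCconst_ne
        (ENNReal.rpow_ne_top_of_nonneg hBnn ENNReal.ofReal_ne_top)
    have h5 := ENNReal.toReal_mono h4 h3
    rwa [ENNReal.toReal_mul, ENNReal.toReal_mul, ← ENNReal.toReal_rpow,
      ← ENNReal.toReal_rpow, ENNReal.toReal_ofReal h1.le] at h5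
  have hfinal := exp_le_of_forall (ENNReal.toReal_pos hc0 hctop) hreal
  -- convert back to ℝ≥0∞
  have hp0 : ∀ j : Fin n, p j ≠ 0 := fun j => (lt_of_lt_of_le zero_lt_one (hp j)).ne'
  have hr0 : r ≠ 0 := (lt_of_lt_of_le zero_lt_one hr).ne'
  have hfin1 : ∀ j : Fin n, (1 / p j) ≠ ∞ := fun j => by
    rw [one_div]
    exact ENNReal.inv_ne_top.2 (hp0 j)
  have hfinsum : (∑ j ∈ Finset.univ.erase k, 1 / p j) ≠ ∞ := by
    refine (ENNReal.sum_lt_top.2 fun j _ => ?_).ne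
    exact (hfin1 j).lt_top
  have hfin2 : 2 / p k ≠ ∞ := by
    rw [ENNReal.div_eq_inv_mul]
    exact ENNReal.mul_ne_top (ENNReal.inv_ne_top.2 (hp0 k)) (by norm_num)
  have hfinr : 2 / r ≠ ∞ := by
    rw [ENNReal.div_eq_inv_mul]
    exact ENNReal.mul_ne_top (ENNReal.inv_ne_top.2 hr0) (by norm_num)
  have hL : (∑ j ∈ Finset.univ.erase k, 1 / p j) + 2 / p k ≠ ∞ :=
    ENNReal.add_ne_top.2 ⟨hfinsum, hfin2⟩
  have hR : ((n - 1 : ℕ) : ℝ≥0∞) + 2 / r ≠ ∞ :=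
    ENNReal.add_ne_top.2 ⟨ENNReal.natCast_ne_top _, hfinr⟩
  refine (ENNReal.toReal_le_toReal hL hR).1 ?_
  rw [ENNReal.toReal_add hfinsum hfin2, ENNReal.toReal_add (ENNReal.natCast_ne_top _) hfinr,
    ENNReal.toReal_sum (fun j _ => hfin1 j), ENNReal.toReal_natCast]
  simp only [one_div, div_eq_mul_inv, one_mul, ENNReal.toReal_mul, ENNReal.toReal_inv,
    ENNReal.toReal_ofNat, ENNReal.toReal_one] at hfinal ⊢
  linarith [hfinal]
end

section
/- There exists a finite constant C > 0 such that for every nonnegative measurable function f₁ on ℝ and every measurable set F ⊆ ℝ of finite Lebesgue measure, ‖T(f₁, χ_F)‖_∞ ≤ C ‖f₁‖_∞ |F|^{1/2}; that is, in dimension n = 2 the operator T is of restricted type at the point E = (0, 1/2; 0). -/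
open MeasureTheory ENNReal

/-- The bilinear spherical average in dimension `n = 2`:
`T(f₁,f₂)(x) = (1/(2π)) ∫₀^{2π} f₁(x − cos t) f₂(x − sin t) dt`. -/
noncomputable def T2 (f₁ f₂ : ℝ → ℝ) (x : ℝ) : ℝ≥0∞ :=
  (ENNReal.ofReal (2 * Real.pi))⁻¹ *
    ∫⁻ t in Set.Ioc 0 (2 * Real.pi),
      ENNReal.ofReal (f₁ (x - Real.cos t)) * ENNReal.ofReal (f₂ (x - Real.sin t))

/-! ### Auxiliary lemmas -/

/-- One-dimensional change of variables for the Lebesgue integral. -/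
theorem my_lintegral_image {s : Set ℝ} {f f' : ℝ → ℝ}
    (hs : MeasurableSet s) (hf' : ∀ x ∈ s, HasDerivWithinAt f (f' x) s x)
    (hf : Set.InjOn f s) (g : ℝ → ℝ≥0∞) :
    ∫⁻ x in f '' s, g x = ∫⁻ x in s, ENNReal.ofReal |f' x| * g (f x) := by
  simpa only [ContinuousLinearMap.det_toSpanSingleton] using
    MeasureTheory.lintegral_image_eq_lintegral_abs_det_fderiv_mul volume hs
      (fun x hx => (hf' x hx).hasFDerivWithinAt) hf g

theorem edge_int {c δ : ℝ} (hδ : 0 < δ) :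
    ∫⁻ y in Set.Ioo (c - δ) c, ENNReal.ofReal ((Real.sqrt (c - y))⁻¹)
      ≤ ENNReal.ofReal (2 * Real.sqrt δ) := by
  have hpt : ∀ y ∈ Set.Ioo (c - δ) c, (Real.sqrt (c - y))⁻¹ = (c - y) ^ (-(1/2) : ℝ) := by
    intro y hy
    rw [Real.rpow_neg (by linarith [hy.2] : (0:ℝ) ≤ c - y), ← Real.sqrt_eq_rpow]
  have hint : IntervalIntegrable (fun y => (c - y) ^ (-(1/2) : ℝ)) volume (c - δ) c := by
    have h0 : IntervalIntegrable (fun u : ℝ => u ^ (-(1/2) : ℝ)) volume 0 δ :=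
      intervalIntegral.intervalIntegrable_rpow' (by norm_num)
    have := (h0.comp_sub_left c).symm
    simpa using this
  have hIoo : IntegrableOn (fun y => (c - y) ^ (-(1/2) : ℝ)) (Set.Ioo (c - δ) c) := by
    have := (intervalIntegrable_iff_integrableOn_Ioo_of_le (by linarith)).mp hint
    exact this
  have hval : ∫ y in Set.Ioo (c - δ) c, (c - y) ^ (-(1/2) : ℝ) = 2 * Real.sqrt δ := by
    rw [← MeasureTheory.integral_Ioc_eq_integral_Ioo,
      ← intervalIntegral.integral_of_le (by linarith : c - δ ≤ c)]
    have := intervalIntegral.integral_comp_sub_left (a := c - δ) (b := c)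
      (fun u : ℝ => u ^ (-(1/2) : ℝ)) c
    simp only [_root_.sub_sub_cancel, sub_self] at this
    rw [this, integral_rpow (Or.inl (by norm_num))]
    rw [Real.sqrt_eq_rpow]
    norm_num
    ring
  calc ∫⁻ y in Set.Ioo (c - δ) c, ENNReal.ofReal ((Real.sqrt (c - y))⁻¹)
      = ∫⁻ y in Set.Ioo (c - δ) c, ENNReal.ofReal ((c - y) ^ (-(1/2) : ℝ)) := by
        refine setLIntegral_congr_fun measurableSet_Ioo ?_
        intro y hy; beta_reduce; rw [hpt y hy]
    _ = ENNReal.ofReal (∫ y in Set.Ioo (c - δ) c, (c - y) ^ (-(1/2) : ℝ)) := by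
        rw [← MeasureTheory.ofReal_integral_eq_lintegral_ofReal hIoo]
        · exact ((ae_restrict_iff' measurableSet_Ioo).mpr (Filter.Eventually.of_forall
            (fun y hy => Real.rpow_nonneg (by linarith [hy.2]) _)))
    _ ≤ ENNReal.ofReal (2 * Real.sqrt δ) := by rw [hval]

/-- The weight `1/√(1-y²)`. -/
noncomputable def wgt (y : ℝ) : ℝ≥0∞ := ENNReal.ofReal ((Real.sqrt (1 - y^2))⁻¹)

theorem left_edge_int {δ : ℝ} (hδ : 0 < δ) :
    ∫⁻ y in Set.Ioo (-1 : ℝ) (-(1 - δ)), ENNReal.ofReal ((Real.sqrt (1 + y))⁻¹)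
      ≤ ENNReal.ofReal (2 * Real.sqrt δ) := by
  have himg : (fun x : ℝ => -x) '' Set.Ioo (1 - δ) 1 = Set.Ioo (-1 : ℝ) (-(1 - δ)) := by
    rw [Set.image_neg_Ioo]
  have := my_lintegral_image (f := fun x : ℝ => -x) (f' := fun _ => (-1 : ℝ))
    (s := Set.Ioo (1 - δ) 1) measurableSet_Ioo
    (fun x _ => (hasDerivAt_neg x).hasDerivWithinAt)
    (fun a _ b _ h => by simpa using h)
    (fun y => ENNReal.ofReal ((Real.sqrt (1 + y))⁻¹))
  rw [himg] at this
  rw [this]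
  have : ∀ x : ℝ, ENNReal.ofReal |(-1 : ℝ)| * ENNReal.ofReal ((Real.sqrt (1 + -x))⁻¹)
      = ENNReal.ofReal ((Real.sqrt (1 - x))⁻¹) := by
    intro x; rw [abs_neg, abs_one, ENNReal.ofReal_one, one_mul]; ring_nf
  simp only [this]
  simpa using edge_int (c := 1) hδ

/-- Bound for the weighted integral of an indicator. -/
theorem I_bound (E : Set ℝ) (hE : MeasurableSet E) {δ : ℝ} (hδ0 : 0 < δ) (hδ1 : δ ≤ 1) :
    ∫⁻ y in Set.Ioo (-1 : ℝ) 1, E.indicator 1 y * wgt y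
      ≤ ENNReal.ofReal ((Real.sqrt δ)⁻¹) * min (volume E) 2 + ENNReal.ofReal (4 * Real.sqrt δ) := by
  have hsub : Set.Ioo (-1 : ℝ) 1 ⊆
      (Set.Ioo (-1 : ℝ) (-(1 - δ)) ∪ Set.Icc (-(1 - δ)) (1 - δ)) ∪ Set.Ioo (1 - δ) 1 := by
    intro y hy
    rcases le_or_gt y (1 - δ) with h | h
    · rcases lt_or_ge y (-(1 - δ)) with h' | h'
      · exact Or.inl (Or.inl ⟨hy.1, h'⟩)
      · exact Or.inl (Or.inr ⟨h', h⟩)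
    · exact Or.inr ⟨h, hy.2⟩
  have hindle : ∀ y : ℝ, E.indicator 1 y ≤ (1 : ℝ≥0∞) := by
    intro y; by_cases h : y ∈ E <;> simp [h]
  calc ∫⁻ y in Set.Ioo (-1 : ℝ) 1, E.indicator 1 y * wgt y
      ≤ ∫⁻ y in (Set.Ioo (-1 : ℝ) (-(1 - δ)) ∪ Set.Icc (-(1 - δ)) (1 - δ)) ∪ Set.Ioo (1 - δ) 1,
          E.indicator 1 y * wgt y := lintegral_mono_set hsub
    _ ≤ (∫⁻ y in Set.Ioo (-1 : ℝ) (-(1 - δ)), E.indicator 1 y * wgt y)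
          + (∫⁻ y in Set.Icc (-(1 - δ)) (1 - δ), E.indicator 1 y * wgt y)
          + ∫⁻ y in Set.Ioo (1 - δ) 1, E.indicator 1 y * wgt y := by
        refine le_trans (lintegral_union_le _ _ _) ?_
        exact add_le_add (lintegral_union_le _ _ _) le_rfl
    _ ≤ ENNReal.ofReal (2 * Real.sqrt δ)
          + ENNReal.ofReal ((Real.sqrt δ)⁻¹) * min (volume E) 2
          + ENNReal.ofReal (2 * Real.sqrt δ) := by
        gcongr
        · -- left edge
          refine le_trans (setLIntegral_mono (by fun_prop) ?_) (left_edge_int hδ0)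
          intro y hy
          refine le_trans (mul_le_mul' (hindle y) le_rfl) ?_
          rw [one_mul, wgt]
          refine ENNReal.ofReal_le_ofReal ?_
          have h1 : (0:ℝ) < 1 + y := by linarith [hy.1]
          refine inv_anti₀ (Real.sqrt_pos.mpr h1) ?_
          refine Real.sqrt_le_sqrt ?_
          nlinarith [hy.1, hy.2]
        · -- middle
          have hb : ∀ y ∈ Set.Icc (-(1 - δ)) (1 - δ),
              E.indicator 1 y * wgt y ≤ ENNReal.ofReal ((Real.sqrt δ)⁻¹) * E.indicator 1 y := by
            intro y hy
            rw [mul_comm]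
            refine mul_le_mul' ?_ le_rfl
            rw [wgt]
            refine ENNReal.ofReal_le_ofReal ?_
            have h1 : δ ≤ 1 - y^2 := by nlinarith [hy.1, hy.2]
            refine inv_anti₀ (Real.sqrt_pos.mpr hδ0) ?_
            exact Real.sqrt_le_sqrt h1
          refine le_trans (setLIntegral_mono (measurable_const.mul (measurable_one.indicator hE)) hb) ?_
          simp only [Pi.mul_apply]
          rw [lintegral_const_mul _ ((measurable_one.indicator hE))]
          refine mul_le_mul' le_rfl ?_
          rw [lintegral_indicator_one hE, Measure.restrict_apply hE]
          refine le_min (measure_mono Set.inter_subset_left) ?_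
          refine le_trans (measure_mono Set.inter_subset_right) ?_
          rw [Real.volume_Icc]
          refine le_trans (ENNReal.ofReal_le_ofReal (by linarith : (1-δ) - -(1-δ) ≤ 2)) ?_
          simp
        · -- right edge
          refine le_trans (setLIntegral_mono (g := fun y => ENNReal.ofReal ((Real.sqrt (1 - y))⁻¹)) (by fun_prop) ?_) (by simpa using edge_int (c := 1) hδ0)
          intro y hy
          refine le_trans (mul_le_mul' (hindle y) le_rfl) ?_
          rw [one_mul, wgt]
          refine ENNReal.ofReal_le_ofReal ?_
          have h1 : (0:ℝ) < 1 - y := by linarith [hy.2]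
          refine inv_anti₀ (Real.sqrt_pos.mpr h1) ?_
          refine Real.sqrt_le_sqrt ?_
          nlinarith [hy.1, hy.2, hδ1]
    _ = ENNReal.ofReal ((Real.sqrt δ)⁻¹) * min (volume E) 2 + ENNReal.ofReal (4 * Real.sqrt δ) := by
        rw [add_comm (ENNReal.ofReal (2 * Real.sqrt δ)) _, add_assoc,
          ← ENNReal.ofReal_add (by positivity) (by positivity)]
        ring_nf

/-- Change of variables bound on a monotone piece of `sin`. -/
theorem sin_piece (E : Set ℝ) {a b : ℝ}
    (hinj : Set.InjOn Real.sin (Set.Ioo a b))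
    (hcos : ∀ t ∈ Set.Ioo a b, Real.cos t ≠ 0) :
    ∫⁻ t in Set.Ioo a b, E.indicator 1 (Real.sin t)
      ≤ ∫⁻ y in Set.Ioo (-1 : ℝ) 1, E.indicator 1 y * wgt y := by
  have hsin_mem : ∀ t ∈ Set.Ioo a b, Real.sin t ∈ Set.Ioo (-1 : ℝ) 1 := by
    intro t ht
    have h1 : Real.sin t ^ 2 + Real.cos t ^ 2 = 1 := Real.sin_sq_add_cos_sq t
    have h2 : 0 < Real.cos t ^ 2 := by
      have := hcos t ht
      positivity
    constructor <;> nlinarith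
  have habs : ∀ t ∈ Set.Ioo a b, |Real.cos t| = Real.sqrt (1 - Real.sin t ^ 2) := by
    intro t ht
    rw [← Real.sqrt_sq_eq_abs]
    congr 1
    have := Real.sin_sq_add_cos_sq t
    linarith
  have hpt : ∀ t ∈ Set.Ioo a b, (E.indicator 1 (Real.sin t) : ℝ≥0∞)
      = ENNReal.ofReal |Real.cos t| * (E.indicator 1 (Real.sin t) * wgt (Real.sin t)) := by
    intro t ht
    have hst := hsin_mem t ht
    have hpos : 0 < Real.sqrt (1 - Real.sin t ^ 2) := by
      refine Real.sqrt_pos.mpr ?_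
      nlinarith [hst.1, hst.2]
    rw [habs t ht, wgt, mul_comm (E.indicator 1 (Real.sin t)) _, ← mul_assoc,
      ← ENNReal.ofReal_mul (Real.sqrt_nonneg _), mul_inv_cancel₀ hpos.ne',
      ENNReal.ofReal_one, one_mul]
  calc ∫⁻ t in Set.Ioo a b, E.indicator 1 (Real.sin t)
      = ∫⁻ t in Set.Ioo a b,
          ENNReal.ofReal |Real.cos t| * (E.indicator 1 (Real.sin t) * wgt (Real.sin t)) :=
        setLIntegral_congr_fun measurableSet_Ioo hpt
    _ = ∫⁻ y in Real.sin '' Set.Ioo a b, E.indicator 1 y * wgt y := by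
        rw [my_lintegral_image measurableSet_Ioo
          (fun t _ => (Real.hasDerivAt_sin t).hasDerivWithinAt) hinj
          (fun y => E.indicator 1 y * wgt y)]
    _ ≤ ∫⁻ y in Set.Ioo (-1 : ℝ) 1, E.indicator 1 y * wgt y := by
        refine lintegral_mono_set ?_
        rintro y ⟨t, ht, rfl⟩
        exact hsin_mem t ht

theorem sin_count (E : Set ℝ) (hE : MeasurableSet E) {δ : ℝ} (hδ0 : 0 < δ) (hδ1 : δ ≤ 1) :
    ∫⁻ t in Set.Ioc 0 (2 * Real.pi), E.indicator 1 (Real.sin t)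
      ≤ 3 * (ENNReal.ofReal ((Real.sqrt δ)⁻¹) * min (volume E) 2
          + ENNReal.ofReal (4 * Real.sqrt δ)) := by
  have hπ : 0 < Real.pi := Real.pi_pos
  -- injectivity and nonvanishing of cos on the three pieces
  have hinj1 : Set.InjOn Real.sin (Set.Ioo 0 (Real.pi / 2)) := by
    refine Real.injOn_sin.mono ?_
    intro t ht
    exact ⟨by linarith [ht.1], le_of_lt ht.2⟩
  have hcos1 : ∀ t ∈ Set.Ioo (0:ℝ) (Real.pi / 2), Real.cos t ≠ 0 := by
    intro t ht
    exact (Real.cos_pos_of_mem_Ioo ⟨by linarith [ht.1], ht.2⟩).ne'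
  have hinj2 : Set.InjOn Real.sin (Set.Ioo (Real.pi / 2) (3 * Real.pi / 2)) := by
    intro t1 ht1 t2 ht2 h
    have h1 : Real.cos (t1 - Real.pi / 2) = Real.cos (t2 - Real.pi / 2) := by
      rw [Real.cos_sub_pi_div_two, Real.cos_sub_pi_div_two]; exact h
    have : t1 - Real.pi / 2 = t2 - Real.pi / 2 := Real.injOn_cos
      ⟨by linarith [ht1.1], by linarith [ht1.2]⟩ ⟨by linarith [ht2.1], by linarith [ht2.2]⟩ h1
    linarith
  have hcos2 : ∀ t ∈ Set.Ioo (Real.pi / 2) (3 * Real.pi / 2), Real.cos t ≠ 0 := by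
    intro t ht
    exact (Real.cos_neg_of_pi_div_two_lt_of_lt ht.1 (by linarith [ht.2])).ne
  have hinj3 : Set.InjOn Real.sin (Set.Ioo (3 * Real.pi / 2) (2 * Real.pi)) := by
    intro t1 ht1 t2 ht2 h
    have h1 : Real.sin (2 * Real.pi - t1) = Real.sin (2 * Real.pi - t2) := by
      rw [Real.sin_two_pi_sub, Real.sin_two_pi_sub, h]
    have : 2 * Real.pi - t1 = 2 * Real.pi - t2 := Real.injOn_sin
      ⟨by linarith [ht1.2], by linarith [ht1.1]⟩ ⟨by linarith [ht2.2], by linarith [ht2.1]⟩ h1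
    linarith
  have hcos3 : ∀ t ∈ Set.Ioo (3 * Real.pi / 2) (2 * Real.pi), Real.cos t ≠ 0 := by
    intro t ht
    have : Real.cos (t - 2 * Real.pi) = Real.cos t := Real.cos_sub_two_pi t
    rw [← this]
    exact (Real.cos_pos_of_mem_Ioo ⟨by linarith [ht.1], by linarith [ht.2]⟩).ne'
  -- covering
  have hsub : Set.Ioc (0:ℝ) (2 * Real.pi) ⊆
      ((Set.Ioo 0 (Real.pi / 2) ∪ Set.Ioo (Real.pi / 2) (3 * Real.pi / 2))
        ∪ Set.Ioo (3 * Real.pi / 2) (2 * Real.pi))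
        ∪ ({Real.pi / 2, 3 * Real.pi / 2, 2 * Real.pi} : Set ℝ) := by
    intro t ht
    rcases lt_trichotomy t (Real.pi / 2) with h | h | h
    · exact Or.inl (Or.inl (Or.inl ⟨ht.1, h⟩))
    · exact Or.inr (by simp [h])
    · rcases lt_trichotomy t (3 * Real.pi / 2) with h' | h' | h'
      · exact Or.inl (Or.inl (Or.inr ⟨h, h'⟩))
      · exact Or.inr (by simp [h'])
      · rcases lt_or_eq_of_le ht.2 with h'' | h''
        · exact Or.inl (Or.inr ⟨h', h''⟩)
        · exact Or.inr (by simp [h''])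
  have hfin : volume ({Real.pi / 2, 3 * Real.pi / 2, 2 * Real.pi} : Set ℝ) = 0 := by
    refine Set.Finite.measure_zero ?_ _
    exact (Set.finite_singleton _).insert _ |>.insert _
  have hIle := I_bound E hE hδ0 hδ1
  calc ∫⁻ t in Set.Ioc 0 (2 * Real.pi), E.indicator 1 (Real.sin t)
      ≤ ∫⁻ t in ((Set.Ioo 0 (Real.pi / 2) ∪ Set.Ioo (Real.pi / 2) (3 * Real.pi / 2))
          ∪ Set.Ioo (3 * Real.pi / 2) (2 * Real.pi))
          ∪ ({Real.pi / 2, 3 * Real.pi / 2, 2 * Real.pi} : Set ℝ),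
          E.indicator 1 (Real.sin t) := lintegral_mono_set hsub
    _ ≤ (((∫⁻ t in Set.Ioo (0:ℝ) (Real.pi / 2), E.indicator 1 (Real.sin t))
          + ∫⁻ t in Set.Ioo (Real.pi / 2) (3 * Real.pi / 2), E.indicator 1 (Real.sin t))
          + ∫⁻ t in Set.Ioo (3 * Real.pi / 2) (2 * Real.pi), E.indicator 1 (Real.sin t))
          + ∫⁻ t in ({Real.pi / 2, 3 * Real.pi / 2, 2 * Real.pi} : Set ℝ),
              E.indicator 1 (Real.sin t) := by
        refine le_trans (lintegral_union_le _ _ _) ?_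
        refine add_le_add ?_ le_rfl
        refine le_trans (lintegral_union_le _ _ _) ?_
        exact add_le_add (lintegral_union_le _ _ _) le_rfl
    _ ≤ ((∫⁻ y in Set.Ioo (-1 : ℝ) 1, E.indicator 1 y * wgt y)
          + (∫⁻ y in Set.Ioo (-1 : ℝ) 1, E.indicator 1 y * wgt y)
          + ∫⁻ y in Set.Ioo (-1 : ℝ) 1, E.indicator 1 y * wgt y) + 0 := by
        refine add_le_add ?_ ?_
        · exact add_le_add (add_le_add (sin_piece E hinj1 hcos1) (sin_piece E hinj2 hcos2))
            (sin_piece E hinj3 hcos3)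
        · exact le_of_eq (setLIntegral_measure_zero _ _ hfin)
    _ = 3 * ∫⁻ y in Set.Ioo (-1 : ℝ) 1, E.indicator 1 y * wgt y := by ring
    _ ≤ 3 * (ENNReal.ofReal ((Real.sqrt δ)⁻¹) * min (volume E) 2
          + ENNReal.ofReal (4 * Real.sqrt δ)) := by
        exact mul_le_mul' le_rfl hIle

theorem cos_piece_ae (N : Set ℝ) (hN : MeasurableSet N) (h0 : volume N = 0) {a b : ℝ}
    (hinj : Set.InjOn Real.cos (Set.Ioo a b))
    (hsin : ∀ t ∈ Set.Ioo a b, Real.sin t ≠ 0) :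
    ∀ᵐ t, t ∈ Set.Ioo a b → Real.cos t ∉ N := by
  have key : ∫⁻ t in Set.Ioo a b,
      ENNReal.ofReal |(-Real.sin t)| * N.indicator 1 (Real.cos t) = 0 := by
    rw [← my_lintegral_image measurableSet_Ioo
      (fun t _ => (Real.hasDerivAt_cos t).hasDerivWithinAt) hinj (fun y => N.indicator 1 y)]
    refine le_antisymm ?_ (zero_le)
    calc ∫⁻ y in Real.cos '' Set.Ioo a b, N.indicator 1 y
        ≤ ∫⁻ y, N.indicator 1 y := setLIntegral_le_lintegral _ _
      _ = volume N := lintegral_indicator_one hN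
      _ = 0 := h0
  have hmeas : Measurable fun t => ENNReal.ofReal |(-Real.sin t)| * N.indicator 1 (Real.cos t) :=
    ((Real.measurable_sin.neg.abs).ennreal_ofReal).mul
      ((measurable_one.indicator hN).comp Real.measurable_cos)
  rw [lintegral_eq_zero_iff hmeas] at key
  have hae := (ae_restrict_iff' measurableSet_Ioo).mp key
  filter_upwards [hae] with t ht hmem hcontra
  have h1 := ht hmem
  simp only [Pi.zero_apply, abs_neg, Set.indicator_of_mem hcontra, Pi.one_apply, mul_one,
    ENNReal.ofReal_eq_zero, abs_nonpos_iff] at h1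
  have h2 : ¬ |Real.sin t| ≤ 0 := by
    rw [not_le]
    exact abs_pos.mpr (hsin t hmem)
  exact h2 (by simpa using h1)

theorem cos_ae_notin (N : Set ℝ) (hN : MeasurableSet N) (h0 : volume N = 0) :
    ∀ᵐ t, t ∈ Set.Ioc 0 (2 * Real.pi) → Real.cos t ∉ N := by
  have hπ : 0 < Real.pi := Real.pi_pos
  have hinj1 : Set.InjOn Real.cos (Set.Ioo 0 Real.pi) :=
    Real.injOn_cos.mono Set.Ioo_subset_Icc_self
  have hsin1 : ∀ t ∈ Set.Ioo (0:ℝ) Real.pi, Real.sin t ≠ 0 := fun t ht =>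
    (Real.sin_pos_of_pos_of_lt_pi ht.1 ht.2).ne'
  have hinj2 : Set.InjOn Real.cos (Set.Ioo Real.pi (2 * Real.pi)) := by
    intro t1 ht1 t2 ht2 h
    have h1 : Real.cos (2 * Real.pi - t1) = Real.cos (2 * Real.pi - t2) := by
      rw [Real.cos_two_pi_sub, Real.cos_two_pi_sub, h]
    have : 2 * Real.pi - t1 = 2 * Real.pi - t2 := Real.injOn_cos
      ⟨by linarith [ht1.2], by linarith [ht1.1]⟩ ⟨by linarith [ht2.2], by linarith [ht2.1]⟩ h1
    linarith
  have hsin2 : ∀ t ∈ Set.Ioo Real.pi (2 * Real.pi), Real.sin t ≠ 0 := by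
    intro t ht
    have h1 : 0 < Real.sin (2 * Real.pi - t) :=
      Real.sin_pos_of_pos_of_lt_pi (by linarith [ht.2]) (by linarith [ht.1])
    rw [Real.sin_two_pi_sub] at h1
    intro h; rw [h] at h1; simp at h1
  have hfin : (∀ᵐ t : ℝ, t ∉ ({Real.pi, 2 * Real.pi} : Set ℝ)) := by
    refine MeasureTheory.measure_eq_zero_iff_ae_notMem.mp ?_
    exact Set.Finite.measure_zero ((Set.finite_singleton _).insert _) _
  filter_upwards [cos_piece_ae N hN h0 hinj1 hsin1, cos_piece_ae N hN h0 hinj2 hsin2, hfin]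
    with t h1 h2 h3 hmem
  rcases lt_trichotomy t Real.pi with h | h | h
  · exact h1 ⟨hmem.1, h⟩
  · exact absurd (by simp [h]) h3
  · rcases lt_or_eq_of_le hmem.2 with h' | h'
    · exact h2 ⟨h, h'⟩
    · exact absurd (by simp [h']) h3

theorem three_ofReal (a : ℝ) (ha : 0 ≤ a) : (3 : ℝ≥0∞) * ENNReal.ofReal a = ENNReal.ofReal (3 * a) := by
  rw [ENNReal.ofReal_mul (by norm_num)]
  norm_num

theorem bound18 {m : ℝ} (hm : 0 < m) :
    3 * (ENNReal.ofReal ((Real.sqrt (min 1 m))⁻¹) * min (ENNReal.ofReal m) 2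
        + ENNReal.ofReal (4 * Real.sqrt (min 1 m)))
      ≤ ENNReal.ofReal (18 * Real.sqrt m) := by
  rcases le_total m 1 with h | h
  · have hmin : min 1 m = m := min_eq_right h
    have hmin2 : min (ENNReal.ofReal m) 2 = ENNReal.ofReal m := by
      refine min_eq_left ?_
      refine le_trans (ENNReal.ofReal_le_ofReal h) ?_
      simp [ENNReal.ofReal_one]
    rw [hmin, hmin2, ← ENNReal.ofReal_mul (by positivity)]
    have hsq : (Real.sqrt m)⁻¹ * m = Real.sqrt m := by
      field_simp
      rw [Real.sq_sqrt hm.le]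
    rw [hsq, ← ENNReal.ofReal_add (by positivity) (by positivity)]
    have : Real.sqrt m + 4 * Real.sqrt m = 5 * Real.sqrt m := by ring
    rw [this, three_ofReal _ (by positivity)]
    refine ENNReal.ofReal_le_ofReal ?_
    nlinarith [Real.sqrt_nonneg m]
  · have hmin : min 1 m = 1 := min_eq_left h
    have h1 : (1:ℝ) ≤ Real.sqrt m := by
      rw [show (1:ℝ) = Real.sqrt 1 by simp]
      exact Real.sqrt_le_sqrt h
    rw [hmin, Real.sqrt_one, inv_one, ENNReal.ofReal_one, one_mul]
    calc 3 * (min (ENNReal.ofReal m) 2 + ENNReal.ofReal (4 * 1))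
        ≤ 3 * ((2:ℝ≥0∞) + ENNReal.ofReal 4) := by
          gcongr
          · exact min_le_right _ _
          · norm_num
      _ = ENNReal.ofReal 18 := by
          rw [show (2:ℝ≥0∞) = ENNReal.ofReal 2 by simp,
            ← ENNReal.ofReal_add (by norm_num) (by norm_num), three_ofReal _ (by norm_num)]
          norm_num
      _ ≤ ENNReal.ofReal (18 * Real.sqrt m) := by
          refine ENNReal.ofReal_le_ofReal ?_
          nlinarith

theorem restricted_type_at_E :
    ∃ C : ℝ, 0 < C ∧ ∀ f₁ : ℝ → ℝ, Measurable f₁ → (∀ x, 0 ≤ f₁ x) →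
      ∀ F : Set ℝ, MeasurableSet F → volume F < ∞ →
      lpNorm ∞ (T2 f₁ (F.indicator fun _ => (1 : ℝ))) ≤ ENNReal.ofReal C *
        lpNorm ∞ (fun x => ENNReal.ofReal (f₁ x)) *
        volume F ^ ((1 : ℝ) / 2) := by
  refine ⟨18, by norm_num, ?_⟩
  intro f₁ hf₁ hf₁0 F hF hFfin
  simp only [_root_.lpNorm, reduceIte]
  set M := essSup (fun x => ENNReal.ofReal (f₁ x)) (volume : Measure ℝ) with hMdef
  -- pointwise facts about the translated set
  have hEx_meas : ∀ x : ℝ, MeasurableSet ((fun s => x - s) ⁻¹' F) := fun x =>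
    hF.preimage (measurable_const.sub measurable_id)
  have hEx_vol : ∀ x : ℝ, volume ((fun s => x - s) ⁻¹' F) = volume F := fun x =>
    (Measure.measurePreserving_sub_left volume x).measure_preimage hF.nullMeasurableSet
  have hind : ∀ x t : ℝ, ENNReal.ofReal ((F.indicator fun _ => (1:ℝ)) (x - Real.sin t))
      = ((fun s => x - s) ⁻¹' F).indicator 1 (Real.sin t) := by
    intro x t
    by_cases h : x - Real.sin t ∈ F
    · rw [Set.indicator_of_mem h, Set.indicator_of_mem (by simpa [Set.mem_preimage] using h)]
      simp
    · rw [Set.indicator_of_notMem h, Set.indicator_of_notMem (by simpa [Set.mem_preimage] using h)]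
      simp
  by_cases hF0 : volume F = 0
  · -- trivial case : |F| = 0
    have hT : ∀ x : ℝ, T2 f₁ (F.indicator fun _ => (1:ℝ)) x = 0 := by
      intro x
      set E := (fun s => x - s) ⁻¹' F with hE
      have hS : ∫⁻ t in Set.Ioc 0 (2 * Real.pi), E.indicator 1 (Real.sin t) = 0 := by
        refine le_antisymm ?_ (zero_le)
        refine ENNReal.le_of_forall_pos_le_add fun ε hε _ => ?_
        rw [zero_add]
        have hδ0 : (0:ℝ) < min 1 (((ε:ℝ)/12)^2) := by
          refine lt_min one_pos ?_
          have : (0:ℝ) < (ε:ℝ) := hε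
          positivity
        have hδ1 : min 1 (((ε:ℝ)/12)^2) ≤ 1 := min_le_left _ _
        have hbd := sin_count E (hEx_meas x) hδ0 hδ1
        rw [hEx_vol x, hF0] at hbd
        simp only [zero_le, min_eq_left, mul_zero, zero_add] at hbd
        refine le_trans hbd ?_
        have hsq : Real.sqrt (min 1 (((ε:ℝ)/12)^2)) ≤ (ε:ℝ)/12 := by
          refine le_trans (Real.sqrt_le_sqrt (min_le_right _ _)) ?_
          rw [Real.sqrt_sq (by positivity)]
        calc 3 * ENNReal.ofReal (4 * Real.sqrt (min 1 (((ε:ℝ)/12)^2)))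
            ≤ 3 * ENNReal.ofReal (4 * ((ε:ℝ)/12)) := by gcongr
          _ = ENNReal.ofReal (3 * (4 * ((ε:ℝ)/12))) := three_ofReal _ (by positivity)
          _ = ENNReal.ofReal (ε:ℝ) := by rw [show (3:ℝ) * (4 * ((ε:ℝ)/12)) = (ε:ℝ) by ring]
          _ = (ε : ℝ≥0∞) := ENNReal.ofReal_coe_nnreal
      have hmeas : Measurable fun t : ℝ => E.indicator (1 : ℝ → ℝ≥0∞) (Real.sin t) := by
        exact Measurable.comp' (measurable_one.indicator (hEx_meas x)) Real.measurable_sin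
      rw [lintegral_eq_zero_iff hmeas] at hS
      rw [T2]
      have hz : ∫⁻ t in Set.Ioc 0 (2 * Real.pi),
          ENNReal.ofReal (f₁ (x - Real.cos t))
            * ENNReal.ofReal ((F.indicator fun _ => (1:ℝ)) (x - Real.sin t)) = 0 := by
        have hc : ∀ᵐ t ∂(volume.restrict (Set.Ioc 0 (2 * Real.pi))),
            ENNReal.ofReal (f₁ (x - Real.cos t))
              * ENNReal.ofReal ((F.indicator fun _ => (1:ℝ)) (x - Real.sin t)) = 0 := by
          filter_upwards [hS] with t ht
          rw [hind x t, ht, Pi.zero_apply, mul_zero]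
        rw [lintegral_congr_ae hc, lintegral_zero]
      rw [hz, mul_zero]
    refine le_trans (essSup_le_of_ae_le 0 (Filter.Eventually.of_forall fun x => le_of_eq (hT x)))
      (zero_le)
  by_cases hMtop : M = ∞
  · -- trivial case : essSup = ∞
    have h1 : (0:ℝ≥0∞) < volume F ^ ((1:ℝ)/2) :=
      ENNReal.rpow_pos (pos_iff_ne_zero.mpr hF0) hFfin.ne
    have h2 : ENNReal.ofReal 18 * M * volume F ^ ((1:ℝ)/2) = ⊤ := by
      rw [hMtop, ENNReal.mul_top (by simp : ENNReal.ofReal 18 ≠ 0)]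
      exact ENNReal.top_mul h1.ne'
    rw [h2]
    exact le_top
  -- main case
  have hm : 0 < (volume F).toReal := ENNReal.toReal_pos hF0 hFfin.ne
  set m := (volume F).toReal with hmdef
  have hvolF : volume F = ENNReal.ofReal m := (ENNReal.ofReal_toReal hFfin.ne).symm
  have hδ0 : (0:ℝ) < min 1 m := lt_min one_pos hm
  have hδ1 : min 1 m ≤ 1 := min_le_left _ _
  refine essSup_le_of_ae_le _ (Filter.Eventually.of_forall fun x => ?_)
  -- pointwise bound for T2 at x
  set E := (fun s => x - s) ⁻¹' F with hE
  set N := {y : ℝ | M < ENNReal.ofReal (f₁ y)} with hNdef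
  have hN : MeasurableSet N := measurableSet_lt measurable_const hf₁.ennreal_ofReal
  have hN0 : volume N = 0 := by
    have h := ae_le_essSup (μ := (volume : Measure ℝ)) (fun y => ENNReal.ofReal (f₁ y))
    rw [ae_iff] at h
    simpa [hNdef, not_le] using h
  set N' := (fun c => x - c) ⁻¹' N with hN'def
  have hN' : MeasurableSet N' := hN.preimage (measurable_const.sub measurable_id)
  have hN'0 : volume N' = 0 := by
    rw [hN'def, (Measure.measurePreserving_sub_left volume x).measure_preimage
      hN.nullMeasurableSet]
    exact hN0
  have hcos' : ∀ᵐ t ∂(volume.restrict (Set.Ioc 0 (2 * Real.pi))),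
      ENNReal.ofReal (f₁ (x - Real.cos t)) ≤ M := by
    filter_upwards [ae_restrict_of_ae (cos_ae_notin N' hN' hN'0),
      ae_restrict_mem measurableSet_Ioc] with t h1 h2
    have h3 := h1 h2
    rw [hN'def, Set.mem_preimage, hNdef, Set.mem_setOf_eq, not_lt] at h3
    exact h3
  have hSbd : ∫⁻ t in Set.Ioc 0 (2 * Real.pi), E.indicator 1 (Real.sin t)
      ≤ ENNReal.ofReal (18 * Real.sqrt m) := by
    refine le_trans (sin_count E (hEx_meas x) hδ0 hδ1) ?_
    rw [hE, hEx_vol x, hvolF]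
    exact bound18 hm
  calc T2 f₁ (F.indicator fun _ => (1:ℝ)) x
      ≤ (ENNReal.ofReal (2 * Real.pi))⁻¹ * (M * ENNReal.ofReal (18 * Real.sqrt m)) := by
        rw [T2]
        refine mul_le_mul' le_rfl ?_
        calc ∫⁻ t in Set.Ioc 0 (2 * Real.pi),
              ENNReal.ofReal (f₁ (x - Real.cos t))
                * ENNReal.ofReal ((F.indicator fun _ => (1:ℝ)) (x - Real.sin t))
            ≤ ∫⁻ t in Set.Ioc 0 (2 * Real.pi), M * E.indicator 1 (Real.sin t) := by
              refine lintegral_mono_ae ?_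
              filter_upwards [hcos'] with t ht
              rw [hind x t]
              exact mul_le_mul' ht le_rfl
          _ = M * ∫⁻ t in Set.Ioc 0 (2 * Real.pi), E.indicator 1 (Real.sin t) :=
              lintegral_const_mul' _ _ hMtop
          _ ≤ M * ENNReal.ofReal (18 * Real.sqrt m) := mul_le_mul' le_rfl hSbd
    _ ≤ 1 * (M * ENNReal.ofReal (18 * Real.sqrt m)) := by
        refine mul_le_mul' ?_ le_rfl
        refine ENNReal.inv_le_one.mpr ?_
        rw [show (1:ℝ≥0∞) = ENNReal.ofReal 1 by simp]
        refine ENNReal.ofReal_le_ofReal ?_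
        linarith [Real.pi_gt_three]
    _ = ENNReal.ofReal 18 * M * volume F ^ ((1:ℝ)/2) := by
        rw [one_mul, hvolF, ENNReal.ofReal_rpow_of_nonneg hm.le (by norm_num),
          show m ^ ((1:ℝ)/2) = Real.sqrt m from (Real.sqrt_eq_rpow m).symm,
          ENNReal.ofReal_mul (by norm_num : (0:ℝ) ≤ 18)]
        ring
end
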